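/- Let x₁,…,x_r ∈ F₂ⁿ be linearly independent. If Σᵢ₌₁^r xᵢxᵢᵀ = Σᵢ₌₁^r yᵢyᵢᵀ for some y₁,…,y_r ∈ F₂ⁿ, then the linear span of x₁,…,x_r equals the linear span of y₁,…,y_r. -/

import Mathlib

open Matrix

lemma sum_vecMulVec_mulVec {n r : ℕ} (a : Fin r → Fin n → ZMod 2) (v : Fin n → ZMod 2) :
    (∑ i, vecMulVec (a i) (a i)) *ᵥ v = ∑ i, (a i ⬝ᵥ v) • a i := by
  ext j
  simp only [mulVec, dotProduct, Matrix.sum_apply, vecMulVec_apply, Pi.smul_apply,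
    Finset.sum_apply, smul_eq_mul, Finset.sum_mul]
  rw [Finset.sum_comm]
  exact Finset.sum_congr rfl fun i _ => Finset.sum_congr rfl fun l _ => by ring

lemma mem_span_of_outer {n r : ℕ} (x y : Fin r → Fin n → ZMod 2)
    (hli : LinearIndependent (ZMod 2) x)
    (h : (∑ i, vecMulVec (x i) (x i)) = ∑ i, vecMulVec (y i) (y i)) (k : Fin r) :
    x k ∈ Submodule.span (ZMod 2) (Set.range y) := by
  classical
  -- find a dual functional
  obtain ⟨f, hf⟩ : ∃ f : (Fin n → ZMod 2) →ₗ[ZMod 2] ZMod 2,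
      ∀ i, f (x i) = if i = k then 1 else 0 := by
    have hs := hli.linearIndepOn_id
    refine ⟨(Module.Basis.extend hs).coord ⟨x k, Module.Basis.subset_extend hs ⟨k, rfl⟩⟩, fun i => ?_⟩
    have hxi : x i = Module.Basis.extend hs ⟨x i, Module.Basis.subset_extend hs ⟨i, rfl⟩⟩ :=
      (Module.Basis.extend_apply_self hs ⟨x i, Module.Basis.subset_extend hs ⟨i, rfl⟩⟩).symm
    rw [hxi, Module.Basis.coord_apply, Module.Basis.repr_self, Finsupp.single_apply]
    by_cases hik : i = k
    · subst hik; simp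
    · rw [if_neg, if_neg hik]
      intro hc
      exact hik (hli.injective (Subtype.mk.injEq _ _ _ _ ▸ hc))
  set v : Fin n → ZMod 2 := fun j => f (fun l => if j = l then 1 else 0) with hv
  have hdot : ∀ u : Fin n → ZMod 2, u ⬝ᵥ v = f u := by
    intro u
    conv_rhs => rw [pi_eq_sum_univ u]
    rw [map_sum]
    simp only [_root_.map_smul, smul_eq_mul, dotProduct, hv]
  have hx : (∑ i, vecMulVec (x i) (x i)) *ᵥ v = x k := by
    rw [sum_vecMulVec_mulVec]
    have : ∀ i, (x i ⬝ᵥ v) • x i = if i = k then x k else 0 := by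
      intro i
      rw [hdot, hf i]
      by_cases hik : i = k <;> simp [hik]
    rw [Finset.sum_congr rfl fun i _ => this i]
    simp
  have hy : (∑ i, vecMulVec (y i) (y i)) *ᵥ v = ∑ i, (y i ⬝ᵥ v) • y i :=
    sum_vecMulVec_mulVec y v
  have : x k = ∑ i, (y i ⬝ᵥ v) • y i := by rw [← hx, h, hy]
  rw [this]
  exact Submodule.sum_mem _ fun i _ =>
    Submodule.smul_mem _ _ (Submodule.subset_span ⟨i, rfl⟩)

/-- If `x₁,…,x_r` are linearly independent and `∑ xᵢxᵢᵀ = ∑ yᵢyᵢᵀ`, then the spans coincide. -/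
theorem span_eq_of_sum_outer_eq {n r : ℕ} (x y : Fin r → Fin n → ZMod 2)
    (hli : LinearIndependent (ZMod 2) x)
    (h : (∑ i, vecMulVec (x i) (x i)) = ∑ i, vecMulVec (y i) (y i)) :
    Submodule.span (ZMod 2) (Set.range x) = Submodule.span (ZMod 2) (Set.range y) := by
  classical
  have hle : Submodule.span (ZMod 2) (Set.range x) ≤ Submodule.span (ZMod 2) (Set.range y) := by
    rw [Submodule.span_le]
    rintro _ ⟨k, rfl⟩
    exact mem_span_of_outer x y hli h k
  apply Submodule.eq_of_le_of_finrank_le hle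
  rw [finrank_span_eq_card hli]
  exact (finrank_span_le_card _).trans
    (by convert Fintype.card_range_le y; rfl; rw [Set.toFinset_card])
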